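/- In any metric space, the minimum spanning tree of a finite point set is a subgraph of the relative neighborhood graph: if an edge {p,q} belongs to some minimum spanning tree of P (with edge weights the metric distances), then there is no point r ∈ P \ {p,q} with d(p,r) < d(p,q) and d(q,r) < d(p,q). -/

import Mathlib

open scoped Classical

/-- The total weight of a graph on a finite point set in a metric space, where
edge weights are the metric distances. -/
noncomputable def graphWeight {X : Type*} [MetricSpace X] {P : Finset X}
    (G : SimpleGraph ↥P) : ℝ :=
  ∑ e ∈ G.edgeFinset, Sym2.lift ⟨fun (a b : ↥P) => dist (a : X) (b : X),
    fun a b => dist_comm (a : X) (b : X)⟩ e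

open SimpleGraph in
private lemma mst_key {X : Type*} [MetricSpace X] {P : Finset X}
    (T : SimpleGraph ↥P) (hconn : T.Connected) (hacyc : T.IsAcyclic)
    (hmin : ∀ T' : SimpleGraph ↥P, T'.Connected → T'.IsAcyclic →
      graphWeight T ≤ graphWeight T')
    (p q r : ↥P) (hpq : T.Adj p q) (hrq : r ≠ q)
    (hdq : dist (q : X) (r : X) < dist (p : X) (q : X))
    (hreach : (T \ fromEdgeSet {s(p, q)}).Reachable r p) : False := by
  set D : SimpleGraph ↥P := T \ fromEdgeSet {s(p, q)} with hDdef
  have hbr : ¬ D.Reachable p q := by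
    have := (isAcyclic_iff_forall_adj_isBridge.mp hacyc) hpq
    exact isBridge_iff.mp this
  have hDT : D ≤ T := sdiff_le
  have hqr_ne : q ≠ r := hrq.symm
  have h_qr_not : ¬ D.Adj q r := by
    intro h
    exact hbr ((h.reachable.trans hreach).symm)
  -- every vertex is D-reachable to p or to q
  have step : ∀ {a b : ↥P}, T.Adj a b →
      (D.Reachable b p ∨ D.Reachable b q) → (D.Reachable a p ∨ D.Reachable a q) := by
    intro a b hT hb
    by_cases he : s(a, b) = s(p, q)
    · rcases Sym2.eq_iff.mp he with ⟨rfl, rfl⟩ | ⟨rfl, rfl⟩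
      · exact Or.inl (Reachable.refl _)
      · exact Or.inr (Reachable.refl _)
    · have hD : D.Adj a b := by
        rw [hDdef, sdiff_adj, fromEdgeSet_adj]
        exact ⟨hT, fun h => he h.1⟩
      rcases hb with h | h
      · exact Or.inl (hD.reachable.trans h)
      · exact Or.inr (hD.reachable.trans h)
  have compAux : ∀ (v u : ↥P) (w : T.Walk v u),
      (D.Reachable u p ∨ D.Reachable u q) → (D.Reachable v p ∨ D.Reachable v q) := by
    intro v u w
    induction w with
    | nil => exact id
    | cons h _ ih => exact fun hend => step h (ih hend)
  have comp : ∀ v : ↥P, D.Reachable v p ∨ D.Reachable v q := fun v =>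
    compAux v q (hconn v q).some (Or.inr (Reachable.refl _))
  have hDT' : D ≤ D ⊔ edge q r := le_sup_left
  have hqrT' : (D ⊔ edge q r).Adj q r := by
    have he : (SimpleGraph.edge q r).Adj q r := by
      rw [edge_adj]; exact ⟨Or.inl ⟨rfl, rfl⟩, hqr_ne⟩
    exact (sup_adj _ _ _ _).mpr (Or.inr he)
  have hpqT' : (D ⊔ edge q r).Reachable p q :=
    (hreach.mono hDT').symm.trans hqrT'.reachable.symm
  have hconn' : (D ⊔ edge q r).Connected := by
    rw [connected_iff]
    refine ⟨fun u v => ?_, hconn.nonempty⟩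
    have hu := comp u
    have hv := comp v
    have key : ∀ w : ↥P, (D ⊔ edge q r).Reachable w p := by
      intro w
      rcases comp w with h | h
      · exact h.mono hDT'
      · exact (h.mono hDT').trans hpqT'.symm
    exact (key u).trans (key v).symm
  have hacyc' : (D ⊔ edge q r).IsAcyclic := by
    intro v c hc
    by_cases hmem : s(q, r) ∈ c.edges
    · have hb : (D ⊔ edge q r).IsBridge s(q, r) := by
        rw [isBridge_iff]
        refine fun hre => ?_
        have hle : (D ⊔ edge q r) \ fromEdgeSet {s(q, r)} ≤ D := by
          intro a b hab
          rw [sdiff_adj] at hab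
          rcases (sup_adj _ _ _ _).mp hab.1 with h | h
          · exact h
          · exact absurd h hab.2
        exact hbr (hreach.symm.trans (hre.mono hle).symm)
      exact (isBridge_iff_adj_and_forall_cycle_notMem hqrT').mp hb c hc hmem
    · have hsub : ∀ e ∈ c.edges, e ∈ T.edgeSet := by
        intro e he
        have hmemE := c.edges_subset_edgeSet he
        rw [edgeSet_sup] at hmemE
        rcases hmemE with h | h
        · exact (edgeSet_subset_edgeSet.mpr hDT) h
        · rw [edge_edgeSet_of_ne hqr_ne, Set.mem_singleton_iff] at h
          exact absurd (h ▸ he) hmem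
      exact hacyc (c.transfer T hsub) (hc.transfer hsub)
  -- weights
  have hTe : s(p, q) ∈ T.edgeFinset := by
    rw [mem_edgeFinset]; exact hpq
  have hDfin : D.edgeFinset = T.edgeFinset.erase s(p, q) := by
    ext e
    simp only [mem_edgeFinset, Finset.mem_erase, hDdef, edgeSet_sdiff, edgeSet_fromEdgeSet,
      Set.mem_diff, Set.mem_singleton_iff]
    constructor
    · rintro ⟨hT, hne⟩
      refine ⟨fun h => hne ⟨h, ?_⟩, hT⟩
      rw [Sym2.mem_diagSet]
      intro hdiag
      exact (T.not_isDiag_of_mem_edgeSet hT) hdiag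
    · rintro ⟨hne, hT⟩
      exact ⟨hT, fun h => hne h.1⟩
  have hnm : s(q, r) ∉ D.edgeFinset := by
    rw [mem_edgeFinset]; exact h_qr_not
  have hwT' : graphWeight (D ⊔ edge q r) =
      dist (q : X) (r : X) + graphWeight D := by
    rw [graphWeight, graphWeight]
    convert Finset.sum_insert hnm using 2 <;>
    first
      | rfl
      | (refine Finset.sum_congr ?_ fun _ _ => rfl
         ext e
         simp only [mem_edgeFinset])
      | (ext e
         simp only [mem_edgeFinset, Finset.mem_insert, edgeSet_sup, Set.mem_union,
           edge_edgeSet_of_ne hqr_ne, Set.mem_singleton_iff]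
         tauto)
  have hwT : graphWeight T = dist (p : X) (q : X) + graphWeight D := by
    rw [graphWeight, graphWeight]
    convert (Finset.add_sum_erase T.edgeFinset _ hTe).symm using 2
    all_goals
    first
      | rfl
      | (refine Finset.sum_congr ?_ fun _ _ => rfl
         ext e
         simp only [mem_edgeFinset, Finset.mem_erase, hDdef, edgeSet_sdiff, edgeSet_fromEdgeSet,
           Set.mem_diff, Set.mem_singleton_iff]
         constructor
         · rintro ⟨hT, hne⟩
           refine ⟨fun h => hne ⟨h, ?_⟩, hT⟩
           rw [Sym2.mem_diagSet]
           intro hdiag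
           exact (T.not_isDiag_of_mem_edgeSet hT) hdiag
         · rintro ⟨hne, hT⟩
           exact ⟨hT, fun h => hne h.1⟩)
  have := hmin (D ⊔ edge q r) hconn' hacyc'
  rw [hwT, hwT'] at this
  linarith

/-- In any metric space, every minimum spanning tree of a finite point
set is a subgraph of the relative neighborhood graph. -/
theorem mst_subgraph_rng {X : Type*} [MetricSpace X] (P : Finset X)
    (T : SimpleGraph ↥P) (hconn : T.Connected) (hacyc : T.IsAcyclic)
    (hmin : ∀ T' : SimpleGraph ↥P, T'.Connected → T'.IsAcyclic →
      graphWeight T ≤ graphWeight T')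
    (p q : ↥P) (hpq : T.Adj p q) :
    ¬ ∃ r : ↥P, r ≠ p ∧ r ≠ q ∧
        dist (p : X) (r : X) < dist (p : X) (q : X) ∧
        dist (q : X) (r : X) < dist (p : X) (q : X) := by
  rintro ⟨r, hrp, hrq, hdp, hdq⟩
  -- r is D-reachable to p or to q; handle both cases via mst_key
  set D : SimpleGraph ↥P := T \ SimpleGraph.fromEdgeSet {s(p, q)} with hDdef
  have hswap : (T \ SimpleGraph.fromEdgeSet {s(q, p)}) = D := by
    rw [hDdef, Sym2.eq_swap]
  -- compute which side r is on, reusing the "comp" argument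
  have hbr : ¬ D.Reachable p q := by
    have := (SimpleGraph.isAcyclic_iff_forall_adj_isBridge.mp hacyc) hpq
    exact SimpleGraph.isBridge_iff.mp this
  have step : ∀ {a b : ↥P}, T.Adj a b →
      (D.Reachable b p ∨ D.Reachable b q) → (D.Reachable a p ∨ D.Reachable a q) := by
    intro a b hT hb
    by_cases he : s(a, b) = s(p, q)
    · rcases Sym2.eq_iff.mp he with ⟨rfl, rfl⟩ | ⟨rfl, rfl⟩
      · exact Or.inl (SimpleGraph.Reachable.refl _)
      · exact Or.inr (SimpleGraph.Reachable.refl _)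
    · have hD : D.Adj a b := by
        rw [hDdef, SimpleGraph.sdiff_adj, SimpleGraph.fromEdgeSet_adj]
        exact ⟨hT, fun h => he h.1⟩
      rcases hb with h | h
      · exact Or.inl (hD.reachable.trans h)
      · exact Or.inr (hD.reachable.trans h)
  have compAux : ∀ (v u : ↥P) (w : T.Walk v u),
      (D.Reachable u p ∨ D.Reachable u q) → (D.Reachable v p ∨ D.Reachable v q) := by
    intro v u w
    induction w with
    | nil => exact id
    | cons h _ ih => exact fun hend => step h (ih hend)
  rcases compAux r q (hconn r q).some (Or.inr (SimpleGraph.Reachable.refl _)) with h | h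
  · exact mst_key T hconn hacyc hmin p q r hpq hrq hdq h
  · refine mst_key T hconn hacyc hmin q p r hpq.symm hrp ?_ ?_
    · rwa [dist_comm (q : X) (p : X)]
    · rwa [hswap]
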